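/- For each i and each j with i+1 ≤ j ≤ N, the function w_i^j(f) = -f_j/(1 - Σ_{l=0}^i f_l) is a Riemann invariant for the i-th field: ∇w_i^j · r_i = 0, where r_i = (0,…,0,1, -f_{i+1}/(1-Σ_{l≤i}f_l),…,-f_N/(1-Σ_{l≤i}f_l)). -/

import Mathlib

/-- For `i+1 ≤ j ≤ N`, the function `w_i^j(f) = -f_j/(1 - Σ_{l≤i} f_l)` is a
Riemann invariant for the `i`-th field: `∇w_i^j · r_i = 0`. -/
theorem stmt5 (N : ℕ) (hN : 1 ≤ N) (f : Fin (N+1) → ℝ)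
    (i j : Fin (N+1)) (hij : i < j)
    (h : 1 - ∑ l ∈ Finset.Iic i, f l ≠ 0)
    (r : Fin (N+1) → ℝ)
    (hr : ∀ k, r k = if k < i then 0 else if k = i then 1
      else -f k / (1 - ∑ l ∈ Finset.Iic i, f l)) :
    fderiv ℝ (fun g : Fin (N+1) → ℝ => -g j / (1 - ∑ l ∈ Finset.Iic i, g l)) f r = 0 := by
  have hj : HasFDerivAt (fun g : Fin (N+1) → ℝ => g j)
      ((ContinuousLinearMap.proj j : (Fin (N+1) → ℝ) →L[ℝ] ℝ)) f := hasFDerivAt_apply j f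
  have hs : HasFDerivAt (fun g : Fin (N+1) → ℝ => ∑ l ∈ Finset.Iic i, g l)
      (∑ l ∈ Finset.Iic i, (ContinuousLinearMap.proj l : (Fin (N+1) → ℝ) →L[ℝ] ℝ)) f :=
    HasFDerivAt.fun_sum (fun l _ => hasFDerivAt_apply l f)
  have hden : HasFDerivAt (fun g : Fin (N+1) → ℝ => 1 - ∑ l ∈ Finset.Iic i, g l)
      (0 - ∑ l ∈ Finset.Iic i, (ContinuousLinearMap.proj l : (Fin (N+1) → ℝ) →L[ℝ] ℝ)) f :=
    (hasFDerivAt_const (1:ℝ) f).sub hs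
  have hnum : HasFDerivAt (fun g : Fin (N+1) → ℝ => -g j)
      (-(ContinuousLinearMap.proj j : (Fin (N+1) → ℝ) →L[ℝ] ℝ)) f := hj.neg
  have hinv : HasFDerivAt (fun g : Fin (N+1) → ℝ => (1 - ∑ l ∈ Finset.Iic i, g l)⁻¹)
      ((-ContinuousLinearMap.mulLeftRight ℝ ℝ (1 - ∑ l ∈ Finset.Iic i, f l)⁻¹
          (1 - ∑ l ∈ Finset.Iic i, f l)⁻¹).comp
        (0 - ∑ l ∈ Finset.Iic i, (ContinuousLinearMap.proj l : (Fin (N+1) → ℝ) →L[ℝ] ℝ))) f :=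
    (hasFDerivAt_inv' h).comp f hden
  have hmul := hnum.fun_mul hinv
  have hgoal : (fun g : Fin (N+1) → ℝ => -g j / (1 - ∑ l ∈ Finset.Iic i, g l)) =
      fun g : Fin (N+1) → ℝ => -g j * (1 - ∑ l ∈ Finset.Iic i, g l)⁻¹ := by
    funext g; rw [div_eq_mul_inv]
  rw [hgoal, hmul.fderiv]
  have hsum : ∑ l ∈ Finset.Iic i, r l = 1 := by
    rw [Finset.sum_eq_single_of_mem i (Finset.mem_Iic.2 le_rfl)]
    · rw [hr i]; simp
    · intro l hl hne
      rw [hr l, if_pos (lt_of_le_of_ne (Finset.mem_Iic.1 hl) hne)]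
  have hrj : r j = -f j / (1 - ∑ l ∈ Finset.Iic i, f l) := by
    rw [hr j, if_neg (by exact fun hc => absurd hc (not_lt.2 hij.le)),
      if_neg (ne_of_gt hij)]
  simp only [ContinuousLinearMap.add_apply, ContinuousLinearMap.coe_smul',
    Pi.smul_apply, ContinuousLinearMap.comp_apply, ContinuousLinearMap.neg_apply,
    ContinuousLinearMap.sub_apply, ContinuousLinearMap.zero_apply,
    ContinuousLinearMap.coe_sum', Finset.sum_apply,
    ContinuousLinearMap.proj_apply, ContinuousLinearMap.mulLeftRight_apply,
    smul_eq_mul, hsum, hrj]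
  field_simp
  ring
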